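/- Incomplete-type integral of the Tricomi U function: for real λ, δ, p > 0 and 0 < v < p, with c < 1, c not an integer, a > 0, 1 + a − c > 0: ∫₀^∞ x^{λ-1} e^{-p x^δ} U(a; c; v x^δ) dx = (1/(δ p^{λ/δ})) · Γ(λ/δ) Γ(λ/δ − c + 1) / Γ(a + λ/δ − c + 1) · ₂F₁(a, λ/δ; a + λ/δ − c + 1; 1 − v/p). -/

import Mathlib

open MeasureTheory Set

noncomputable def tricomiU (a c z : ℝ) : ℝ :=
  (1 / Real.Gamma a) * ∫ u in Set.Ioi (0:ℝ), Real.exp (-(z * u)) * u ^ (a - 1) * (1 + u) ^ (c - a - 1)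

noncomputable def twoF1 (a b c x : ℝ) : ℝ :=
  ∑' n : ℕ, ((ascPochhammer ℝ n).eval a * (ascPochhammer ℝ n).eval b /
    (ascPochhammer ℝ n).eval c) * x ^ n / n.factorial


lemma myGamma_add_nat {t : ℝ} (ht : 0 < t) (n : ℕ) :
    Real.Gamma (t + n) = (ascPochhammer ℝ n).eval t * Real.Gamma t := by
  induction n with
  | zero => simp
  | succ n ih =>
      have h : t + (n + 1 : ℕ) = (t + n) + 1 := by push_cast; ring
      rw [h, Real.Gamma_add_one (by positivity), ih, ascPochhammer_succ_eval]
      ring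

lemma integrableOn_rpow_exp {q r : ℝ} (hq : -1 < q) (hr : 0 < r) :
    IntegrableOn (fun t : ℝ => t ^ q * Real.exp (-(r * t))) (Ioi 0) := by
  have := integrableOn_rpow_mul_exp_neg_mul_rpow (p := 1) hq zero_lt_one hr
  refine this.congr_fun (fun x hx => ?_) measurableSet_Ioi
  dsimp only
  rw [Real.rpow_one]
  ring_nf

lemma lintegral_rpow_exp {a r : ℝ} (ha : 0 < a) (hr : 0 < r) :
    ∫⁻ t in Ioi (0:ℝ), ENNReal.ofReal (t ^ (a-1) * Real.exp (-(r * t)))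
      = ENNReal.ofReal (r ^ (-a) * Real.Gamma a) := by
  rw [← ofReal_integral_eq_lintegral_ofReal
      (integrableOn_rpow_exp (by linarith) hr)
      ((ae_restrict_iff' measurableSet_Ioi).2 (Filter.Eventually.of_forall
        (fun t ht => mul_nonneg (Real.rpow_nonneg (le_of_lt (mem_Ioi.mp ht)) _) (Real.exp_pos _).le)))]
  rw [Real.integral_rpow_mul_exp_neg_mul_Ioi ha hr]
  rw [one_div, Real.inv_rpow hr.le, ← Real.rpow_neg hr.le]

lemma binom_summable {s y : ℝ} (hs : 0 < s) (hy0 : 0 ≤ y) (hy1 : y < 1) :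
    Summable (fun n : ℕ => (ascPochhammer ℝ n).eval s * y ^ n / n.factorial) := by
  set r : ℝ := (1 + y) / 2 with hr
  have hr1 : r < 1 := by rw [hr]; linarith
  have hyr : y < r := by rw [hr]; linarith
  apply summable_of_ratio_norm_eventually_le hr1
  have htend : Filter.Tendsto (fun n : ℕ => (s + n) / (n + 1) * y) Filter.atTop (nhds y) := by
    have h1 : Filter.Tendsto (fun n : ℕ => (s + n) / (n + 1)) Filter.atTop (nhds 1) := by
      have : ∀ n : ℕ, (s + n) / (n + 1) = (s - 1) / (n + 1) + 1 := by
        intro n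
        have : (n : ℝ) + 1 ≠ 0 := by positivity
        field_simp; ring
      simp_rw [this]
      have := (tendsto_natCast_atTop_atTop (R := ℝ)).atTop_add tendsto_const_nhds (C := 1)
      have h2 : Filter.Tendsto (fun n : ℕ => (s - 1) / ((n : ℝ) + 1)) Filter.atTop (nhds 0) :=
        Filter.Tendsto.div_atTop tendsto_const_nhds this
      simpa using h2.add tendsto_const_nhds
    simpa using h1.mul tendsto_const_nhds
  have hev : ∀ᶠ n : ℕ in Filter.atTop, (s + n) / (n + 1) * y ≤ r :=
    htend.eventually_le_const hyr
  filter_upwards [hev] with n hn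
  have hfac : (n.factorial : ℝ) > 0 := by positivity
  have hpoch : 0 < (ascPochhammer ℝ n).eval s := ascPochhammer_pos n s hs
  rw [ascPochhammer_succ_eval]
  rw [Real.norm_eq_abs, Real.norm_eq_abs, abs_of_nonneg, abs_of_nonneg]
  · rw [Nat.factorial_succ, pow_succ]
    push_cast
    calc (ascPochhammer ℝ n).eval s * (s + n) * (y ^ n * y) / ((n+1) * n.factorial)
        = ((s + n) / (n + 1) * y) * ((ascPochhammer ℝ n).eval s * y ^ n / n.factorial) := by
          field_simp
      _ ≤ r * ((ascPochhammer ℝ n).eval s * y ^ n / n.factorial) := by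
          apply mul_le_mul_of_nonneg_right hn (by positivity)
  · positivity
  · have : 0 < s + n := by positivity
    positivity

lemma exp_tsum (x : ℝ) : Real.exp x = ∑' n : ℕ, x ^ n / n.factorial := by
  rw [Real.exp_eq_exp_ℝ, NormedSpace.exp_eq_tsum_div]

lemma binom_tsum {s y : ℝ} (hs : 0 < s) (hy0 : 0 ≤ y) (hy1 : y < 1) :
    (∑' n : ℕ, (ascPochhammer ℝ n).eval s * y ^ n / n.factorial) = (1 - y) ^ (-s) := by
  have hΓ : 0 < Real.Gamma s := Real.Gamma_pos_of_pos hs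
  have h1y : 0 < 1 - y := by linarith
  have hd : ∀ n : ℕ, Real.Gamma (s + n) * y ^ n / n.factorial
      = Real.Gamma s * ((ascPochhammer ℝ n).eval s * y ^ n / n.factorial) := by
    intro n; rw [myGamma_add_nat hs]; ring
  have hdsum : Summable (fun n : ℕ => Real.Gamma (s + n) * y ^ n / n.factorial) := by
    refine Summable.congr (((binom_summable hs hy0 hy1).mul_left (Real.Gamma s))) ?_
    intro n; rw [hd]
  have hdnn : ∀ n : ℕ, 0 ≤ Real.Gamma (s + n) * y ^ n / n.factorial := by
    intro n
    have : 0 < Real.Gamma (s + n) := Real.Gamma_pos_of_pos (by positivity)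
    positivity
  -- key : ∑ dₙ = (1-y)^(-s) * Γ s
  have key : (∑' n : ℕ, Real.Gamma (s + n) * y ^ n / n.factorial)
      = (1 - y) ^ (-s) * Real.Gamma s := by
    have hmeas : ∀ n : ℕ, Measurable (fun t : ℝ =>
        ENNReal.ofReal (t ^ (s-1) * Real.exp (-t) * (y*t) ^ n / n.factorial)) := by
      intro n
      apply ENNReal.measurable_ofReal.comp
      fun_prop
    have step1 : ∀ n : ℕ, (∫⁻ t in Ioi (0:ℝ),
        ENNReal.ofReal (t ^ (s-1) * Real.exp (-t) * (y*t) ^ n / n.factorial))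
        = ENNReal.ofReal (Real.Gamma (s + n) * y ^ n / n.factorial) := by
      intro n
      have hcongr : ∫⁻ t in Ioi (0:ℝ),
          ENNReal.ofReal (t ^ (s-1) * Real.exp (-t) * (y*t) ^ n / n.factorial)
          = ∫⁻ t in Ioi (0:ℝ), ENNReal.ofReal (y ^ n / n.factorial)
              * ENNReal.ofReal (t ^ (s + n - 1) * Real.exp (-(1 * t))) := by
        apply setLIntegral_congr_fun measurableSet_Ioi
        intro t ht
        dsimp only
        rw [← ENNReal.ofReal_mul (by positivity)]
        congr 1
        rw [mul_pow, show s + n - 1 = (s - 1) + n by ring,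
          Real.rpow_add (mem_Ioi.mp ht), Real.rpow_natCast, one_mul]
        ring
      rw [hcongr, lintegral_const_mul' _ _ ENNReal.ofReal_ne_top,
        show s + n - 1 = (s + n) - 1 by ring,
        lintegral_rpow_exp (by positivity) one_pos,
        ← ENNReal.ofReal_mul (by positivity)]
      congr 1
      rw [Real.one_rpow, one_mul]
      ring
    have swap : (∫⁻ t in Ioi (0:ℝ), ENNReal.ofReal (t ^ (s-1) * Real.exp (-((1-y) * t))))
        = ∑' n : ℕ, (∫⁻ t in Ioi (0:ℝ),
            ENNReal.ofReal (t ^ (s-1) * Real.exp (-t) * (y*t) ^ n / n.factorial)) := by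
      rw [← lintegral_tsum (fun n => (hmeas n).aemeasurable)]
      apply setLIntegral_congr_fun measurableSet_Ioi
      intro t ht
      dsimp only
      have hsum : Summable (fun n : ℕ => t ^ (s-1) * Real.exp (-t) * ((y*t) ^ n / n.factorial)) :=
        (Real.summable_pow_div_factorial (y*t)).mul_left _
      have : t ^ (s-1) * Real.exp (-((1-y) * t))
          = ∑' n : ℕ, t ^ (s-1) * Real.exp (-t) * ((y*t) ^ n / n.factorial) := by
        rw [tsum_mul_left, ← exp_tsum, mul_assoc, ← Real.exp_add]
        congr 2
        ring
      rw [this, ENNReal.ofReal_tsum_of_nonneg]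
      · apply tsum_congr; intro n; congr 1; ring
      · intro n
        have ht' : 0 < t := mem_Ioi.mp ht
        positivity
      · exact hsum
    have e1 : (∑' n : ℕ, ENNReal.ofReal (Real.Gamma (s + n) * y ^ n / n.factorial))
        = ENNReal.ofReal ((1-y) ^ (-s) * Real.Gamma s) := by
      rw [← lintegral_rpow_exp hs h1y, swap]
      exact tsum_congr fun n => (step1 n).symm
    rw [← ENNReal.ofReal_tsum_of_nonneg hdnn hdsum] at e1
    have := (ENNReal.ofReal_eq_ofReal_iff (tsum_nonneg hdnn) (by positivity)).mp e1
    exact this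
  apply mul_left_cancel₀ hΓ.ne'
  rw [← tsum_mul_left]
  have : (∑' n : ℕ, Real.Gamma s * ((ascPochhammer ℝ n).eval s * y ^ n / n.factorial))
      = ∑' n : ℕ, Real.Gamma (s + n) * y ^ n / n.factorial :=
    tsum_congr fun n => (hd n).symm
  rw [this, key]
  ring

lemma tsum_ofReal_toReal {c : ℕ → ℝ} (h : ∀ n, 0 ≤ c n) :
    (∑' n, ENNReal.ofReal (c n)).toReal = ∑' n, c n := by
  rw [ENNReal.tsum_toReal_eq (fun n => ENNReal.ofReal_ne_top)]
  exact tsum_congr fun n => ENNReal.toReal_ofReal (h n)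

lemma rbeta_integrableOn {a b : ℝ} (ha : 0 < a) (hb : 0 < b) :
    IntegrableOn (fun w : ℝ => w ^ (a-1) * (1-w) ^ (b-1)) (Ioo 0 1) := by
  have hC : IntervalIntegrable (fun x => (x:ℂ) ^ ((a:ℂ) - 1) * (1 - (x:ℂ)) ^ ((b:ℂ) - 1))
      volume 0 1 := Complex.betaIntegral_convergent (by simpa using ha) (by simpa using hb)
  have hI : IntegrableOn (fun x : ℝ => (x:ℂ) ^ ((a:ℂ) - 1) * (1 - (x:ℂ)) ^ ((b:ℂ) - 1)) (Ioc (0:ℝ) 1) :=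
    (intervalIntegrable_iff_integrableOn_Ioc_of_le zero_le_one).mp hC
  have hI' := (hI.mono_set Ioo_subset_Ioc_self).norm
  refine IntegrableOn.congr_fun hI' (fun x hx => ?_) measurableSet_Ioo
  obtain ⟨hx0, hx1⟩ := hx
  rw [norm_mul,
    Complex.norm_cpow_eq_rpow_re_of_pos hx0,
    show (1 : ℂ) - (x:ℂ) = ((1 - x : ℝ) : ℂ) by push_cast; ring,
    Complex.norm_cpow_eq_rpow_re_of_pos (by linarith)]
  norm_num

lemma rbeta_eq {a b : ℝ} (ha : 0 < a) (hb : 0 < b) :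
    (∫ w in Ioo (0:ℝ) 1, w ^ (a-1) * (1-w) ^ (b-1))
      = Real.Gamma a * Real.Gamma b / Real.Gamma (a+b) := by
  have hG := Complex.Gamma_mul_Gamma_eq_betaIntegral
    (show 0 < Complex.re a by simpa using ha) (show 0 < Complex.re b by simpa using hb)
  have hBeta : Complex.betaIntegral a b = ((∫ w in Ioo (0:ℝ) 1, w ^ (a-1) * (1-w) ^ (b-1) : ℝ) : ℂ) := by
    rw [Complex.betaIntegral, intervalIntegral.integral_of_le zero_le_one,
      ← integral_Ioc_eq_integral_Ioo (f := fun w : ℝ => w ^ (a-1) * (1-w) ^ (b-1))]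
    rw [show ((((∫ t in Ioc (0:ℝ) 1, t ^ (a-1) * (1-t) ^ (b-1)) : ℝ)) : ℂ)
        = ∫ t in Ioc (0:ℝ) 1, (((t ^ (a-1) * (1-t) ^ (b-1) : ℝ)) : ℂ) from
      (integral_ofReal (𝕜 := ℂ)).symm]
    refine setIntegral_congr_fun measurableSet_Ioc (fun x hx => ?_)
    obtain ⟨hx0, hx1⟩ := hx
    push_cast
    rw [Complex.ofReal_cpow hx0.le, Complex.ofReal_cpow (by linarith : (0:ℝ) ≤ 1 - x)]
    push_cast
    ring
  rw [hBeta, ← Complex.ofReal_add, Complex.Gamma_ofReal, Complex.Gamma_ofReal,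
    Complex.Gamma_ofReal, ← Complex.ofReal_mul, ← Complex.ofReal_mul] at hG
  have hreal : Real.Gamma a * Real.Gamma b
      = Real.Gamma (a+b) * ∫ w in Ioo (0:ℝ) 1, w ^ (a-1) * (1-w) ^ (b-1) :=
    Complex.ofReal_inj.mp hG
  have hab : Real.Gamma (a+b) ≠ 0 := (Real.Gamma_pos_of_pos (by linarith)).ne'
  field_simp [hreal]
  rw [hreal]; ring

lemma euler_step {a b s x : ℝ} (ha : 0 < a) (hb : 0 < b) (hs : 0 < s)
    (hx0 : 0 ≤ x) (hx1 : x < 1) :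
    ∫ w in Ioo (0:ℝ) 1, w ^ (a-1) * (1-w) ^ (b-1) * (1 - x*w) ^ (-s)
      = (Real.Gamma a * Real.Gamma b / Real.Gamma (a+b)) * twoF1 a s (a+b) x := by
  -- the term functions
  set T : ℕ → ℝ → ℝ := fun n w =>
    w ^ (a-1) * (1-w) ^ (b-1) * ((ascPochhammer ℝ n).eval s * (x*w) ^ n / n.factorial) with hT
  set C : ℕ → ℝ := fun n =>
    (ascPochhammer ℝ n).eval s * x ^ n / n.factorial
      * (Real.Gamma (a+n) * Real.Gamma b / Real.Gamma (a+b+n)) with hC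
  have hCnn : ∀ n, 0 ≤ C n := by
    intro n
    have h1 : 0 < (ascPochhammer ℝ n).eval s := ascPochhammer_pos n s hs
    have h2 : 0 < Real.Gamma (a+n) := Real.Gamma_pos_of_pos (by positivity)
    have h3 : 0 < Real.Gamma b := Real.Gamma_pos_of_pos hb
    have h4 : 0 < Real.Gamma (a+b+n) := Real.Gamma_pos_of_pos (by positivity)
    positivity
  have hmeasT : ∀ n : ℕ, Measurable (fun w : ℝ => ENNReal.ofReal (T n w)) := by
    intro n; apply ENNReal.measurable_ofReal.comp; rw [hT]; fun_prop
  -- step (a): the integral equals toReal of the lintegral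
  have step_a : ∫ w in Ioo (0:ℝ) 1, w ^ (a-1) * (1-w) ^ (b-1) * (1 - x*w) ^ (-s)
      = (∫⁻ w in Ioo (0:ℝ) 1,
          ENNReal.ofReal (w ^ (a-1) * (1-w) ^ (b-1) * (1 - x*w) ^ (-s))).toReal := by
    apply integral_eq_lintegral_of_nonneg_ae
    · refine (ae_restrict_iff' measurableSet_Ioo).2 (Filter.Eventually.of_forall ?_)
      rintro w ⟨hw0, hw1⟩
      have h1 : (0:ℝ) < 1 - x*w := by nlinarith
      have h2 : (0:ℝ) < 1 - w := by linarith
      positivity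
    · apply Measurable.aestronglyMeasurable; fun_prop
  -- step (b): expand into a series under the lintegral
  have step_b : (∫⁻ w in Ioo (0:ℝ) 1,
        ENNReal.ofReal (w ^ (a-1) * (1-w) ^ (b-1) * (1 - x*w) ^ (-s)))
      = ∑' n : ℕ, ∫⁻ w in Ioo (0:ℝ) 1, ENNReal.ofReal (T n w) := by
    rw [← lintegral_tsum (fun n => (hmeasT n).aemeasurable)]
    apply setLIntegral_congr_fun measurableSet_Ioo
    rintro w ⟨hw0, hw1⟩
    dsimp only
    have hxw0 : 0 ≤ x*w := by positivity
    have hxw1 : x*w < 1 := by nlinarith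
    have hexp : (1 - x*w) ^ (-s) = ∑' n : ℕ, (ascPochhammer ℝ n).eval s * (x*w) ^ n / n.factorial :=
      (binom_tsum hs hxw0 hxw1).symm
    have heq : w ^ (a-1) * (1-w) ^ (b-1) * (1 - x*w) ^ (-s) = ∑' n : ℕ, T n w := by
      rw [hexp, ← tsum_mul_left]
    have hnn : ∀ n : ℕ, 0 ≤ T n w := by
      intro n
      have h1 : 0 < (ascPochhammer ℝ n).eval s := ascPochhammer_pos n s hs
      have h2 : (0:ℝ) ≤ 1 - w := by linarith
      simp only [hT]; positivity
    have hsumm : Summable (fun n : ℕ => T n w) :=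
      ((binom_summable hs hxw0 hxw1).mul_left (w ^ (a-1) * (1-w) ^ (b-1))).congr
        (fun n => rfl)
    rw [heq, ENNReal.ofReal_tsum_of_nonneg hnn hsumm]
  -- step (c): each term integrates to C n
  have step_c : ∀ n : ℕ, (∫⁻ w in Ioo (0:ℝ) 1, ENNReal.ofReal (T n w)) = ENNReal.ofReal (C n) := by
    intro n
    have h1 : 0 < (ascPochhammer ℝ n).eval s := ascPochhammer_pos n s hs
    have hcongr : (∫⁻ w in Ioo (0:ℝ) 1, ENNReal.ofReal (T n w))
        = ∫⁻ w in Ioo (0:ℝ) 1, ENNReal.ofReal ((ascPochhammer ℝ n).eval s * x ^ n / n.factorial)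
            * ENNReal.ofReal (w ^ (a + n - 1) * (1-w) ^ (b-1)) := by
      apply setLIntegral_congr_fun measurableSet_Ioo
      rintro w ⟨hw0, hw1⟩
      dsimp only
      rw [← ENNReal.ofReal_mul (by positivity)]
      congr 1
      simp only [hT]
      rw [mul_pow, show a + (n:ℝ) - 1 = (a - 1) + n by ring, Real.rpow_add hw0,
        Real.rpow_natCast]
      ring
    rw [hcongr, lintegral_const_mul' _ _ ENNReal.ofReal_ne_top,
      ← ofReal_integral_eq_lintegral_ofReal
        (by exact rbeta_integrableOn (by positivity : (0:ℝ) < a + n) hb)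
        ((ae_restrict_iff' measurableSet_Ioo).2 (Filter.Eventually.of_forall
          (fun w hw => mul_nonneg (Real.rpow_nonneg hw.1.le _)
            (Real.rpow_nonneg (by linarith [hw.2] : (0:ℝ) ≤ 1 - w) _)))),
      rbeta_eq (by positivity : (0:ℝ) < a + n) hb,
      ← ENNReal.ofReal_mul (by positivity)]
    simp only [hC]
    rw [show a + (n:ℝ) + b = a + b + (n:ℝ) from by ring]
  -- assemble
  rw [step_a, step_b]
  have : (∑' n : ℕ, ∫⁻ w in Ioo (0:ℝ) 1, ENNReal.ofReal (T n w))
      = ∑' n : ℕ, ENNReal.ofReal (C n) := tsum_congr step_c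
  rw [this, tsum_ofReal_toReal hCnn]
  -- now: ∑' C n = Γa Γb / Γ(a+b) * twoF1 a s (a+b) x
  rw [twoF1, ← tsum_mul_left]
  apply tsum_congr
  intro n
  simp only [hC, myGamma_add_nat ha n, myGamma_add_nat (show (0:ℝ) < a + b by positivity) n]
  have h4 : Real.Gamma (a+b) ≠ 0 := (Real.Gamma_pos_of_pos (by positivity)).ne'
  have h5 : (ascPochhammer ℝ n).eval (a+b) ≠ 0 := (ascPochhammer_pos n _ (by positivity)).ne'
  have h6 : (n.factorial : ℝ) ≠ 0 := by positivity
  field_simp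

lemma Uint_integrable {z a c : ℝ} (hz : 0 < z) (ha : 0 < a) (hca : c - a - 1 ≤ 0) :
    IntegrableOn (fun u : ℝ => Real.exp (-(z*u)) * u ^ (a-1) * (1+u) ^ (c-a-1)) (Ioi 0) := by
  apply Integrable.mono (integrableOn_rpow_exp (by linarith : (-1:ℝ) < a - 1) hz)
  · apply Measurable.aestronglyMeasurable; fun_prop
  · refine (ae_restrict_iff' measurableSet_Ioi).2 (Filter.Eventually.of_forall (fun u hu => ?_))
    have hu0 : 0 < u := mem_Ioi.mp hu
    have h1 : (1+u) ^ (c-a-1) ≤ 1 :=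
      Real.rpow_le_one_of_one_le_of_nonpos (by linarith) hca
    have h2 : (0:ℝ) ≤ (1+u) ^ (c-a-1) := Real.rpow_nonneg (by linarith) _
    rw [Real.norm_eq_abs, Real.norm_eq_abs, abs_of_nonneg (by positivity),
      abs_of_nonneg (by positivity)]
    calc Real.exp (-(z*u)) * u ^ (a-1) * (1+u) ^ (c-a-1)
        ≤ Real.exp (-(z*u)) * u ^ (a-1) * 1 := by
          apply mul_le_mul_of_nonneg_left h1 (by positivity)
      _ = u ^ (a-1) * Real.exp (-(z*u)) := by ring

lemma Uint_nonneg {z a c : ℝ} (u : ℝ) (hu : 0 ≤ u) :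
    0 ≤ Real.exp (-(z*u)) * u ^ (a-1) * (1+u) ^ (c-a-1) := by
  have h2 : (0:ℝ) ≤ (1+u) ^ (c-a-1) := Real.rpow_nonneg (by linarith) _
  positivity

lemma fubini_step {a c s p v : ℝ} (ha : 0 < a) (hs : 0 < s) (hp : 0 < p) (hv : 0 < v)
    (hca : c - a - 1 ≤ 0) :
    ∫ t in Ioi (0:ℝ), t ^ (s-1) * Real.exp (-(p*t))
        * ∫ u in Ioi (0:ℝ), Real.exp (-(v*t*u)) * u ^ (a-1) * (1+u) ^ (c-a-1)
      = Real.Gamma s * ∫ u in Ioi (0:ℝ), u ^ (a-1) * (1+u) ^ (c-a-1) * (p+v*u) ^ (-s) := by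
  have hGnn : ∀ t : ℝ, 0 ≤ ∫ u in Ioi (0:ℝ), Real.exp (-(v*t*u)) * u ^ (a-1) * (1+u) ^ (c-a-1) := by
    intro t
    apply setIntegral_nonneg measurableSet_Ioi
    intro u hu
    exact Uint_nonneg u (le_of_lt (mem_Ioi.mp hu))
  -- measurability of the inner integral as a function of t
  have hGm : StronglyMeasurable (fun t : ℝ =>
      ∫ u in Ioi (0:ℝ), Real.exp (-(v*t*u)) * u ^ (a-1) * (1+u) ^ (c-a-1)) := by
    apply StronglyMeasurable.integral_prod_right'
      (f := fun q : ℝ × ℝ => Real.exp (-(v*q.1*q.2)) * q.2 ^ (a-1) * (1+q.2) ^ (c-a-1))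
    apply Measurable.stronglyMeasurable
    fun_prop
  -- LHS as toReal of lintegral
  rw [MeasureTheory.integral_eq_lintegral_of_nonneg_ae (f := fun t => t ^ (s-1) * Real.exp (-(p*t)) * ∫ u in Ioi (0:ℝ), Real.exp (-(v*t*u)) * u ^ (a-1) * (1+u) ^ (c-a-1))
    ((ae_restrict_iff' measurableSet_Ioi).2 (Filter.Eventually.of_forall (fun t ht => by
      have ht0 : 0 < t := mem_Ioi.mp ht
      have := hGnn t
      positivity)))
    (((by fun_prop : Measurable fun t : ℝ => t ^ (s-1) * Real.exp (-(p*t))).mul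
      hGm.measurable).aestronglyMeasurable)]
  set F : ℝ → ℝ → ℝ := fun t u =>
    t ^ (s-1) * Real.exp (-(p*t)) * (Real.exp (-(v*t*u)) * u ^ (a-1) * (1+u) ^ (c-a-1)) with hF
  have key : (∫⁻ t in Ioi (0:ℝ), ENNReal.ofReal (t ^ (s-1) * Real.exp (-(p*t))
        * ∫ u in Ioi (0:ℝ), Real.exp (-(v*t*u)) * u ^ (a-1) * (1+u) ^ (c-a-1)))
      = ENNReal.ofReal (Real.Gamma s)
        * ∫⁻ u in Ioi (0:ℝ), ENNReal.ofReal (u ^ (a-1) * (1+u) ^ (c-a-1) * (p+v*u) ^ (-s)) := by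
    have st1 : (∫⁻ t in Ioi (0:ℝ), ENNReal.ofReal (t ^ (s-1) * Real.exp (-(p*t))
          * ∫ u in Ioi (0:ℝ), Real.exp (-(v*t*u)) * u ^ (a-1) * (1+u) ^ (c-a-1)))
        = ∫⁻ t in Ioi (0:ℝ), ∫⁻ u in Ioi (0:ℝ), ENNReal.ofReal (F t u) := by
      apply setLIntegral_congr_fun measurableSet_Ioi
      intro t ht
      dsimp only
      have ht0 : 0 < t := mem_Ioi.mp ht
      rw [ENNReal.ofReal_mul (by positivity),
        ofReal_integral_eq_lintegral_ofReal (Uint_integrable (by positivity) ha hca)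
          ((ae_restrict_iff' measurableSet_Ioi).2 (Filter.Eventually.of_forall
            (fun u hu => Uint_nonneg u (le_of_lt (mem_Ioi.mp hu))))),
        ← lintegral_const_mul' _ _ ENNReal.ofReal_ne_top]
      apply setLIntegral_congr_fun measurableSet_Ioi
      intro u hu
      dsimp only
      rw [← ENNReal.ofReal_mul (by positivity)]
    have st2 : (∫⁻ t in Ioi (0:ℝ), ∫⁻ u in Ioi (0:ℝ), ENNReal.ofReal (F t u))
        = ∫⁻ u in Ioi (0:ℝ), ∫⁻ t in Ioi (0:ℝ), ENNReal.ofReal (F t u) := by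
      apply lintegral_lintegral_swap
      apply Measurable.aemeasurable
      apply ENNReal.measurable_ofReal.comp
      simp only [hF]
      fun_prop
    have st3 : (∫⁻ u in Ioi (0:ℝ), ∫⁻ t in Ioi (0:ℝ), ENNReal.ofReal (F t u))
        = ∫⁻ u in Ioi (0:ℝ), ENNReal.ofReal (Real.Gamma s)
            * ENNReal.ofReal (u ^ (a-1) * (1+u) ^ (c-a-1) * (p+v*u) ^ (-s)) := by
      apply setLIntegral_congr_fun measurableSet_Ioi
      intro u hu
      dsimp only
      have hu0 : 0 < u := mem_Ioi.mp hu
      have hpv : 0 < p + v*u := by positivity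
      have h2 : (0:ℝ) ≤ (1+u) ^ (c-a-1) := Real.rpow_nonneg (by linarith) _
      have hinner : (∫⁻ t in Ioi (0:ℝ), ENNReal.ofReal (F t u))
          = ∫⁻ t in Ioi (0:ℝ), ENNReal.ofReal (u ^ (a-1) * (1+u) ^ (c-a-1))
              * ENNReal.ofReal (t ^ (s-1) * Real.exp (-((p+v*u)*t))) := by
        apply setLIntegral_congr_fun measurableSet_Ioi
        intro t ht
        dsimp only
        have ht0 : 0 < t := mem_Ioi.mp ht
        rw [← ENNReal.ofReal_mul (by positivity)]
        congr 1
        simp only [hF]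
        rw [show -((p+v*u)*t) = -(p*t) + -(v*t*u) by ring, Real.exp_add]
        ring
      rw [hinner, lintegral_const_mul' _ _ ENNReal.ofReal_ne_top,
        lintegral_rpow_exp hs hpv, ← ENNReal.ofReal_mul (by positivity),
        ← ENNReal.ofReal_mul (Real.Gamma_nonneg_of_nonneg hs.le)]
      congr 1
      ring
    rw [st1, st2, st3, lintegral_const_mul' _ _ ENNReal.ofReal_ne_top]
  rw [key, ENNReal.toReal_mul, ENNReal.toReal_ofReal (Real.Gamma_nonneg_of_nonneg hs.le)]
  congr 1
  rw [MeasureTheory.integral_eq_lintegral_of_nonneg_ae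
    ((ae_restrict_iff' measurableSet_Ioi).2 (Filter.Eventually.of_forall (fun u hu => by
      have hu0 : 0 < u := mem_Ioi.mp hu
      have h2 : (0:ℝ) ≤ (1+u) ^ (c-a-1) := Real.rpow_nonneg (by linarith) _
      have hpv : 0 < p + v*u := by positivity
      positivity)))
    (Measurable.aestronglyMeasurable (by fun_prop))]

lemma img_lemma : (fun w : ℝ => w / (1-w)) '' Ioo 0 1 = Ioi 0 := by
  ext u
  constructor
  · rintro ⟨w, ⟨hw0, hw1⟩, rfl⟩
    have hm : 0 < 1 - w := by linarith
    exact mem_Ioi.mpr (by positivity)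
  · intro hu
    have hu0 : 0 < u := mem_Ioi.mp hu
    refine ⟨u / (1+u), ⟨by positivity, by rw [div_lt_one (by positivity)]; linarith⟩, ?_⟩
    have h1 : (1:ℝ) + u ≠ 0 := by positivity
    field_simp; ring

lemma inj_lemma : InjOn (fun w : ℝ => w / (1-w)) (Ioo 0 1) := by
  rintro w1 ⟨h10, h11⟩ w2 ⟨h20, h21⟩ h
  have hm1 : (1:ℝ) - w1 ≠ 0 := by intro hq; simp at h ⊢; nlinarith
  have hm2 : (1:ℝ) - w2 ≠ 0 := by intro hq; nlinarith
  field_simp at h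
  nlinarith [h]

lemma deriv_lemma {w : ℝ} (hw : w ∈ Ioo (0:ℝ) 1) :
    HasDerivWithinAt (fun w : ℝ => w / (1-w)) (((1-w)^2)⁻¹) (Ioo 0 1) w := by
  obtain ⟨hw0, hw1⟩ := hw
  have hne : (1:ℝ) - w ≠ 0 := by intro hq; nlinarith
  have h := (hasDerivAt_id w).div ((hasDerivAt_const w (1:ℝ)).sub (hasDerivAt_id w)) hne
  simp only [id_eq, one_mul, zero_sub, mul_neg, mul_one, sub_neg_eq_add, Pi.sub_apply] at h
  have : (1 - w + w) / (1-w)^2 = ((1-w)^2)⁻¹ := by field_simp; ring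
  rw [this] at h
  exact h.hasDerivWithinAt

lemma subst_step {a c s p v : ℝ} (ha : 0 < a) (hs : 0 < s) (hp : 0 < p) (hv : 0 < v)
    (hvp : v < p) :
    ∫ u in Ioi (0:ℝ), u ^ (a-1) * (1+u) ^ (c-a-1) * (p+v*u) ^ (-s)
      = p ^ (-s) * ∫ w in Ioo (0:ℝ) 1,
          w ^ (a-1) * (1-w) ^ ((s-c+1)-1) * (1 - (1 - v/p)*w) ^ (-s) := by
  rw [← img_lemma,
    integral_image_eq_integral_abs_deriv_smul measurableSet_Ioo
      (fun w hw => deriv_lemma hw) inj_lemma, ← integral_const_mul]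
  refine setIntegral_congr_fun measurableSet_Ioo (fun w hw => ?_)
  obtain ⟨hw0, hw1⟩ := hw
  have hm : 0 < 1 - w := by linarith
  have hx0 : 0 < 1 - v/p := by
    have : v/p < 1 := (div_lt_one hp).mpr hvp
    linarith
  have hx1 : 1 - v/p < 1 := by
    have : 0 < v/p := by positivity
    linarith
  have hxw : 0 < 1 - (1 - v/p)*w := by nlinarith
  have e1 : (1:ℝ) + w / (1-w) = (1-w)⁻¹ := by field_simp; ring
  have e2 : p + v * (w / (1-w)) = p * (1 - (1 - v/p)*w) * (1-w)⁻¹ := by field_simp; ring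
  have e3 : w / (1-w) = w * (1-w)⁻¹ := div_eq_mul_inv w (1-w)
  rw [smul_eq_mul, abs_of_nonneg (by positivity), e1, e2, e3]
  rw [Real.mul_rpow hw0.le (by positivity), Real.mul_rpow (by positivity) (by positivity),
    Real.mul_rpow hp.le hxw.le, ← Real.rpow_neg_one (1-w),
    ← Real.rpow_natCast (1-w) 2]
  rw [← Real.rpow_mul hm.le, ← Real.rpow_mul hm.le, ← Real.rpow_mul hm.le,
    ← Real.rpow_neg hm.le]
  have hpow : ((1-w) ^ (-((2:ℕ):ℝ))) * ((1-w) ^ (-1*(a-1)) * ((1-w) ^ (-1*(c-a-1))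
      * (1-w) ^ (-1* -s))) = (1-w) ^ (s-c+1-1) := by
    rw [← Real.rpow_add hm, ← Real.rpow_add hm, ← Real.rpow_add hm]
    congr 1
    push_cast
    ring
  rw [← hpow]
  ring

theorem integral_tricomiU (lam δ p v a c : ℝ)
    (hlam : 0 < lam) (hδ : 0 < δ) (hp : 0 < p) (hv : 0 < v) (hvp : v < p)
    (hc : c < 1) (hcZ : ∀ n : ℤ, c ≠ n) (ha : 0 < a) (hac : 0 < 1 + a - c)
    (h1 : 0 < lam / δ) (h2 : 0 < lam / δ - c + 1) :
    ∫ x in Ioi (0:ℝ), x ^ (lam - 1) * Real.exp (-(p * x ^ δ)) * tricomiU a c (v * x ^ δ)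
      = (1 / (δ * p ^ (lam / δ))) *
        (Real.Gamma (lam / δ) * Real.Gamma (lam / δ - c + 1) / Real.Gamma (a + lam / δ - c + 1)) *
        twoF1 a (lam / δ) (a + lam / δ - c + 1) (1 - v / p) := by
  set s : ℝ := lam / δ with hsdef
  have hca : c - a - 1 ≤ 0 := by linarith
  have hx0 : (0:ℝ) ≤ 1 - v/p := by
    have : v/p < 1 := (div_lt_one hp).mpr hvp
    linarith
  have hx1 : 1 - v/p < 1 := by
    have : 0 < v/p := by positivity
    linarith
  -- Step 1: substitution x ^ δ = t
  have step1 : ∫ x in Ioi (0:ℝ), x ^ (lam - 1) * Real.exp (-(p * x ^ δ)) * tricomiU a c (v * x ^ δ)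
      = δ⁻¹ * ∫ t in Ioi (0:ℝ), t ^ (s-1) * Real.exp (-(p*t)) * tricomiU a c (v*t) := by
    rw [← integral_comp_rpow_Ioi (fun t => t ^ (s-1) * Real.exp (-(p*t)) * tricomiU a c (v*t))
      hδ.ne', ← integral_const_mul]
    refine setIntegral_congr_fun measurableSet_Ioi (fun x hx => ?_)
    have hx0' : 0 < x := mem_Ioi.mp hx
    simp only [smul_eq_mul]
    rw [abs_of_pos hδ, ← Real.rpow_mul hx0'.le]
    rw [show x ^ (lam - 1) = x ^ (δ - 1) * x ^ (δ * (s-1)) * δ⁻¹ * δ by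
      rw [← Real.rpow_add hx0', show δ - 1 + δ * (s-1) = δ * s - 1 by ring,
        hsdef, mul_div_cancel₀ lam hδ.ne']
      field_simp]
    ring
  rw [step1]
  -- Step 2: pull out 1/Γ(a)
  have step2 : ∫ t in Ioi (0:ℝ), t ^ (s-1) * Real.exp (-(p*t)) * tricomiU a c (v*t)
      = (1 / Real.Gamma a) * ∫ t in Ioi (0:ℝ), t ^ (s-1) * Real.exp (-(p*t))
          * ∫ u in Ioi (0:ℝ), Real.exp (-(v*t*u)) * u ^ (a-1) * (1+u) ^ (c-a-1) := by
    rw [← integral_const_mul]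
    refine setIntegral_congr_fun measurableSet_Ioi (fun t ht => ?_)
    rw [tricomiU]
    ring
  rw [step2, fubini_step ha h1 hp hv hca, subst_step ha h1 hp hv hvp,
    euler_step ha h2 h1 hx0 hx1]
  have hΓa : Real.Gamma a ≠ 0 := (Real.Gamma_pos_of_pos ha).ne'
  have hps : (0:ℝ) < p ^ s := Real.rpow_pos_of_pos hp s
  rw [show a + (s - c + 1) = a + s - c + 1 by ring, Real.rpow_neg hp.le]
  have hΓab : Real.Gamma (a + s - c + 1) ≠ 0 := (Real.Gamma_pos_of_pos (by linarith)).ne'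
  have hΓb : Real.Gamma (s - c + 1) ≠ 0 := (Real.Gamma_pos_of_pos h2).ne'
  field_simp [hΓa, hΓab, hΓb, hps.ne', hδ.ne']
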